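/- The coefficient of q^n in Δ^{50} is divisible by 25 unless n ≡ 0 (mod 5), and Δ^{50} ≡ q^50 + 10q^55 + 15q^60 + 5q^65 + 5q^70 + 12q^75 (mod 25) up to order q^80. -/

import Mathlib

open PowerSeries


private lemma coeff_pow_congr {a b : PowerSeries ℤ} {N : ℕ}
    (h : ∀ m ≤ N, coeff m a = coeff m b) (k : ℕ) :
    ∀ m ≤ N, coeff m (a ^ k) = coeff m (b ^ k) := by
  induction k with
  | zero => intro m _; rfl
  | succ k ih =>
    intro m hm
    rw [pow_succ, pow_succ, coeff_mul, coeff_mul]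
    refine Finset.sum_congr rfl fun p hp => ?_
    rw [Finset.HasAntidiagonal.mem_antidiagonal] at hp
    rw [ih p.1 (by omega), h p.2 (by omega)]

private lemma supp_mul {a b : PowerSeries ℤ}
    (ha : ∀ m : ℕ, ¬ (5 ∣ m) → coeff m a = 0) (hb : ∀ m : ℕ, ¬ (5 ∣ m) → coeff m b = 0) :
    ∀ m : ℕ, ¬ (5 ∣ m) → coeff m (a * b) = 0 := by
  intro m hm
  rw [coeff_mul]
  refine Finset.sum_eq_zero fun p hp => ?_
  rw [Finset.HasAntidiagonal.mem_antidiagonal] at hp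
  by_cases h1 : 5 ∣ p.1
  · rw [hb p.2 (by omega), mul_zero]
  · rw [ha p.1 h1, zero_mul]

private lemma supp_pow {a : PowerSeries ℤ}
    (ha : ∀ m : ℕ, ¬ (5 ∣ m) → coeff m a = 0) (k : ℕ) :
    ∀ m : ℕ, ¬ (5 ∣ m) → coeff m (a ^ k) = 0 := by
  induction k with
  | zero =>
    intro m hm
    rw [pow_zero, coeff_one, if_neg (by omega)]
  | succ k ih =>
    rw [pow_succ]
    exact supp_mul ih ha

private lemma pow10_expand_dvd (q : Polynomial ℤ) (m : ℕ) :
    (5 : ℤ) ∣ (q ^ 10).coeff m - (Polynomial.expand ℤ 5 (q ^ 2)).coeff m := by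
  haveI : Fact (Nat.Prime 5) := ⟨by norm_num⟩
  have hz : ((q ^ 10 - Polynomial.expand ℤ 5 (q ^ 2)).map (Int.castRingHom (ZMod 5))) = 0 := by
    rw [Polynomial.map_sub, Polynomial.map_pow, Polynomial.map_expand, Polynomial.map_pow]
    have hexp : Polynomial.expand (ZMod 5) 5 ((q.map (Int.castRingHom (ZMod 5))) ^ 2) =
        ((q.map (Int.castRingHom (ZMod 5))) ^ 2) ^ 5 := by
      have h := Polynomial.map_frobenius_expand 5 ((q.map (Int.castRingHom (ZMod 5))) ^ 2)
      rw [ZMod.frobenius_zmod] at h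
      rwa [Polynomial.map_id] at h
    rw [hexp]
    ring
  have h1 := congrArg (fun r => r.coeff m) hz
  simp only [Polynomial.coeff_map, Polynomial.coeff_sub, Polynomial.coeff_zero, eq_intCast] at h1
  exact_mod_cast (ZMod.intCast_zmod_eq_zero_iff_dvd _ 5).1 h1


private lemma dstep {A B C r D E : Polynomial ℤ} (hA : (Polynomial.X : Polynomial ℤ) ^ 6 ∣ D - A)
    (hB : (Polynomial.X : Polynomial ℤ) ^ 6 ∣ E - B) (h : A * B = C + Polynomial.X ^ 6 * r) :
    (Polynomial.X : Polynomial ℤ) ^ 6 ∣ D * E - C := by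
  have key : D * E - C = (D - A) * E + A * (E - B) + Polynomial.X ^ 6 * r := by linear_combination h
  rw [key]
  exact dvd_add (dvd_add (hA.mul_right E) (hB.mul_left A)) (dvd_mul_right _ _)

set_option maxHeartbeats 4000000 in
set_option maxRecDepth 100000 in
private lemma keyQ : ∀ j ≤ 15,
    (25 : ℤ) ∣ ((Polynomial.X * ∏ n ∈ Finset.Icc 1 15, (1 - Polynomial.X ^ n) ^ 24 : Polynomial ℤ) ^ 10).coeff j -
      (if j = 10 then (1:ℤ) else if j = 11 then 10 else if j = 12 then 15 else if j = 13 then 5 else if j = 14 then 5 else if j = 15 then 12 else 0) := by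
  have hbase : ∀ k : ℕ, 6 ≤ k → (Polynomial.X : Polynomial ℤ) ^ 6 ∣ (1 - Polynomial.X ^ k) ^ 240 - 1 := by
    intro k hk
    have h1 := sub_dvd_pow_sub_pow (1 - Polynomial.X ^ k : Polynomial ℤ) 1 240
    rw [one_pow] at h1
    rw [show ((1 - Polynomial.X ^ k : Polynomial ℤ) - 1) = -Polynomial.X ^ k by ring] at h1
    exact dvd_trans (dvd_trans (pow_dvd_pow _ hk) (dvd_neg.2 dvd_rfl)) h1
  intro j hj
  have h1_1 : (Polynomial.X : Polynomial ℤ) ^ 6 ∣ (1 - Polynomial.X : Polynomial ℤ) ^ 1 - (1 - Polynomial.X : Polynomial ℤ) := ⟨0, by ring⟩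
  have h1_2 : (Polynomial.X : Polynomial ℤ) ^ 6 ∣ (1 - Polynomial.X : Polynomial ℤ) ^ 2 - (1 - 2 * Polynomial.X + Polynomial.X ^ 2 : Polynomial ℤ) := by
    have hs := dstep h1_1 h1_1 (C := (1 - 2 * Polynomial.X + Polynomial.X ^ 2 : Polynomial ℤ)) (r := (0 : Polynomial ℤ)) (by ring)
    rwa [← pow_add] at hs
  have h1_3 : (Polynomial.X : Polynomial ℤ) ^ 6 ∣ (1 - Polynomial.X : Polynomial ℤ) ^ 3 - (1 - 3 * Polynomial.X + 3 * Polynomial.X ^ 2 - Polynomial.X ^ 3 : Polynomial ℤ) := by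
    have hs := dstep h1_2 h1_1 (C := (1 - 3 * Polynomial.X + 3 * Polynomial.X ^ 2 - Polynomial.X ^ 3 : Polynomial ℤ)) (r := (0 : Polynomial ℤ)) (by ring)
    rwa [← pow_add] at hs
  have h1_6 : (Polynomial.X : Polynomial ℤ) ^ 6 ∣ (1 - Polynomial.X : Polynomial ℤ) ^ 6 - (1 - 6 * Polynomial.X + 15 * Polynomial.X ^ 2 - 20 * Polynomial.X ^ 3 + 15 * Polynomial.X ^ 4 - 6 * Polynomial.X ^ 5 : Polynomial ℤ) := by
    have hs := dstep h1_3 h1_3 (C := (1 - 6 * Polynomial.X + 15 * Polynomial.X ^ 2 - 20 * Polynomial.X ^ 3 + 15 * Polynomial.X ^ 4 - 6 * Polynomial.X ^ 5 : Polynomial ℤ)) (r := (1 : Polynomial ℤ)) (by ring)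
    rwa [← pow_add] at hs
  have h1_7 : (Polynomial.X : Polynomial ℤ) ^ 6 ∣ (1 - Polynomial.X : Polynomial ℤ) ^ 7 - (1 - 7 * Polynomial.X + 21 * Polynomial.X ^ 2 - 35 * Polynomial.X ^ 3 + 35 * Polynomial.X ^ 4 - 21 * Polynomial.X ^ 5 : Polynomial ℤ) := by
    have hs := dstep h1_6 h1_1 (C := (1 - 7 * Polynomial.X + 21 * Polynomial.X ^ 2 - 35 * Polynomial.X ^ 3 + 35 * Polynomial.X ^ 4 - 21 * Polynomial.X ^ 5 : Polynomial ℤ)) (r := (6 : Polynomial ℤ)) (by ring)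
    rwa [← pow_add] at hs
  have h1_14 : (Polynomial.X : Polynomial ℤ) ^ 6 ∣ (1 - Polynomial.X : Polynomial ℤ) ^ 14 - (1 - 14 * Polynomial.X + 91 * Polynomial.X ^ 2 - 364 * Polynomial.X ^ 3 + 1001 * Polynomial.X ^ 4 - 2002 * Polynomial.X ^ 5 : Polynomial ℤ) := by
    have hs := dstep h1_7 h1_7 (C := (1 - 14 * Polynomial.X + 91 * Polynomial.X ^ 2 - 364 * Polynomial.X ^ 3 + 1001 * Polynomial.X ^ 4 - 2002 * Polynomial.X ^ 5 : Polynomial ℤ)) (r := (2989 - 3332 * Polynomial.X + 2695 * Polynomial.X ^ 2 - 1470 * Polynomial.X ^ 3 + 441 * Polynomial.X ^ 4 : Polynomial ℤ)) (by ring)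
    rwa [← pow_add] at hs
  have h1_15 : (Polynomial.X : Polynomial ℤ) ^ 6 ∣ (1 - Polynomial.X : Polynomial ℤ) ^ 15 - (1 - 15 * Polynomial.X + 105 * Polynomial.X ^ 2 - 455 * Polynomial.X ^ 3 + 1365 * Polynomial.X ^ 4 - 3003 * Polynomial.X ^ 5 : Polynomial ℤ) := by
    have hs := dstep h1_14 h1_1 (C := (1 - 15 * Polynomial.X + 105 * Polynomial.X ^ 2 - 455 * Polynomial.X ^ 3 + 1365 * Polynomial.X ^ 4 - 3003 * Polynomial.X ^ 5 : Polynomial ℤ)) (r := (2002 : Polynomial ℤ)) (by ring)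
    rwa [← pow_add] at hs
  have h1_30 : (Polynomial.X : Polynomial ℤ) ^ 6 ∣ (1 - Polynomial.X : Polynomial ℤ) ^ 30 - (1 - 30 * Polynomial.X + 435 * Polynomial.X ^ 2 - 4060 * Polynomial.X ^ 3 + 27405 * Polynomial.X ^ 4 - 142506 * Polynomial.X ^ 5 : Polynomial ℤ) := by
    have hs := dstep h1_15 h1_15 (C := (1 - 30 * Polynomial.X + 435 * Polynomial.X ^ 2 - 4060 * Polynomial.X ^ 3 + 27405 * Polynomial.X ^ 4 - 142506 * Polynomial.X ^ 5 : Polynomial ℤ)) (r := (583765 - 1872780 * Polynomial.X + 4595955 * Polynomial.X ^ 2 - 8198190 * Polynomial.X ^ 3 + 9018009 * Polynomial.X ^ 4 : Polynomial ℤ)) (by ring)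
    rwa [← pow_add] at hs
  have h1_60 : (Polynomial.X : Polynomial ℤ) ^ 6 ∣ (1 - Polynomial.X : Polynomial ℤ) ^ 60 - (1 - 60 * Polynomial.X + 1770 * Polynomial.X ^ 2 - 34220 * Polynomial.X ^ 3 + 487635 * Polynomial.X ^ 4 - 5461512 * Polynomial.X ^ 5 : Polynomial ℤ) := by
    have hs := dstep h1_30 h1_30 (C := (1 - 60 * Polynomial.X + 1770 * Polynomial.X ^ 2 - 34220 * Polynomial.X ^ 3 + 487635 * Polynomial.X ^ 4 - 5461512 * Polynomial.X ^ 5 : Polynomial ℤ)) (r := (48876310 - 346508820 * Polynomial.X + 1908182745 * Polynomial.X ^ 2 - 7810753860 * Polynomial.X ^ 3 + 20307960036 * Polynomial.X ^ 4 : Polynomial ℤ)) (by ring)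
    rwa [← pow_add] at hs
  have h1_120 : (Polynomial.X : Polynomial ℤ) ^ 6 ∣ (1 - Polynomial.X : Polynomial ℤ) ^ 120 - (1 - 120 * Polynomial.X + 7140 * Polynomial.X ^ 2 - 280840 * Polynomial.X ^ 3 + 8214570 * Polynomial.X ^ 4 - 190578024 * Polynomial.X ^ 5 : Polynomial ℤ) := by
    have hs := dstep h1_60 h1_60 (C := (1 - 120 * Polynomial.X + 7140 * Polynomial.X ^ 2 - 280840 * Polynomial.X ^ 3 + 8214570 * Polynomial.X ^ 4 - 190578024 * Polynomial.X ^ 5 : Polynomial ℤ)) (r := (3552617740 - 52707491880 * Polynomial.X + 611573774505 * Polynomial.X ^ 2 - 5326448808240 * Polynomial.X ^ 3 + 29828113326144 * Polynomial.X ^ 4 : Polynomial ℤ)) (by ring)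
    rwa [← pow_add] at hs
  have h1_240 : (Polynomial.X : Polynomial ℤ) ^ 6 ∣ (1 - Polynomial.X : Polynomial ℤ) ^ 240 - (1 - 240 * Polynomial.X + 28680 * Polynomial.X ^ 2 - 2275280 * Polynomial.X ^ 3 + 134810340 * Polynomial.X ^ 4 - 6363048048 * Polynomial.X ^ 5 : Polynomial ℤ) := by
    have hs := dstep h1_120 h1_120 (C := (1 - 240 * Polynomial.X + 28680 * Polynomial.X ^ 2 - 2275280 * Polynomial.X ^ 3 + 134810340 * Polynomial.X ^ 4 - 6363048048 * Polynomial.X ^ 5 : Polynomial ℤ)) (r := (241913890960 - 7335413860320 * Polynomial.X + 174523024805220 * Polynomial.X ^ 2 - 3131033037219360 * Polynomial.X ^ 3 + 36319983231744576 * Polynomial.X ^ 4 : Polynomial ℤ)) (by ring)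
    rwa [← pow_add] at hs
  have h2_1 : (Polynomial.X : Polynomial ℤ) ^ 6 ∣ (1 - Polynomial.X ^ 2 : Polynomial ℤ) ^ 1 - (1 - Polynomial.X ^ 2 : Polynomial ℤ) := ⟨0, by ring⟩
  have h2_2 : (Polynomial.X : Polynomial ℤ) ^ 6 ∣ (1 - Polynomial.X ^ 2 : Polynomial ℤ) ^ 2 - (1 - 2 * Polynomial.X ^ 2 + Polynomial.X ^ 4 : Polynomial ℤ) := by
    have hs := dstep h2_1 h2_1 (C := (1 - 2 * Polynomial.X ^ 2 + Polynomial.X ^ 4 : Polynomial ℤ)) (r := (0 : Polynomial ℤ)) (by ring)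
    rwa [← pow_add] at hs
  have h2_3 : (Polynomial.X : Polynomial ℤ) ^ 6 ∣ (1 - Polynomial.X ^ 2 : Polynomial ℤ) ^ 3 - (1 - 3 * Polynomial.X ^ 2 + 3 * Polynomial.X ^ 4 : Polynomial ℤ) := by
    have hs := dstep h2_2 h2_1 (C := (1 - 3 * Polynomial.X ^ 2 + 3 * Polynomial.X ^ 4 : Polynomial ℤ)) (r := (-1 : Polynomial ℤ)) (by ring)
    rwa [← pow_add] at hs
  have h2_6 : (Polynomial.X : Polynomial ℤ) ^ 6 ∣ (1 - Polynomial.X ^ 2 : Polynomial ℤ) ^ 6 - (1 - 6 * Polynomial.X ^ 2 + 15 * Polynomial.X ^ 4 : Polynomial ℤ) := by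
    have hs := dstep h2_3 h2_3 (C := (1 - 6 * Polynomial.X ^ 2 + 15 * Polynomial.X ^ 4 : Polynomial ℤ)) (r := (-18 + 9 * Polynomial.X ^ 2 : Polynomial ℤ)) (by ring)
    rwa [← pow_add] at hs
  have h2_7 : (Polynomial.X : Polynomial ℤ) ^ 6 ∣ (1 - Polynomial.X ^ 2 : Polynomial ℤ) ^ 7 - (1 - 7 * Polynomial.X ^ 2 + 21 * Polynomial.X ^ 4 : Polynomial ℤ) := by
    have hs := dstep h2_6 h2_1 (C := (1 - 7 * Polynomial.X ^ 2 + 21 * Polynomial.X ^ 4 : Polynomial ℤ)) (r := (-15 : Polynomial ℤ)) (by ring)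
    rwa [← pow_add] at hs
  have h2_14 : (Polynomial.X : Polynomial ℤ) ^ 6 ∣ (1 - Polynomial.X ^ 2 : Polynomial ℤ) ^ 14 - (1 - 14 * Polynomial.X ^ 2 + 91 * Polynomial.X ^ 4 : Polynomial ℤ) := by
    have hs := dstep h2_7 h2_7 (C := (1 - 14 * Polynomial.X ^ 2 + 91 * Polynomial.X ^ 4 : Polynomial ℤ)) (r := (-294 + 441 * Polynomial.X ^ 2 : Polynomial ℤ)) (by ring)
    rwa [← pow_add] at hs
  have h2_15 : (Polynomial.X : Polynomial ℤ) ^ 6 ∣ (1 - Polynomial.X ^ 2 : Polynomial ℤ) ^ 15 - (1 - 15 * Polynomial.X ^ 2 + 105 * Polynomial.X ^ 4 : Polynomial ℤ) := by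
    have hs := dstep h2_14 h2_1 (C := (1 - 15 * Polynomial.X ^ 2 + 105 * Polynomial.X ^ 4 : Polynomial ℤ)) (r := (-91 : Polynomial ℤ)) (by ring)
    rwa [← pow_add] at hs
  have h2_30 : (Polynomial.X : Polynomial ℤ) ^ 6 ∣ (1 - Polynomial.X ^ 2 : Polynomial ℤ) ^ 30 - (1 - 30 * Polynomial.X ^ 2 + 435 * Polynomial.X ^ 4 : Polynomial ℤ) := by
    have hs := dstep h2_15 h2_15 (C := (1 - 30 * Polynomial.X ^ 2 + 435 * Polynomial.X ^ 4 : Polynomial ℤ)) (r := (-3150 + 11025 * Polynomial.X ^ 2 : Polynomial ℤ)) (by ring)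
    rwa [← pow_add] at hs
  have h2_60 : (Polynomial.X : Polynomial ℤ) ^ 6 ∣ (1 - Polynomial.X ^ 2 : Polynomial ℤ) ^ 60 - (1 - 60 * Polynomial.X ^ 2 + 1770 * Polynomial.X ^ 4 : Polynomial ℤ) := by
    have hs := dstep h2_30 h2_30 (C := (1 - 60 * Polynomial.X ^ 2 + 1770 * Polynomial.X ^ 4 : Polynomial ℤ)) (r := (-26100 + 189225 * Polynomial.X ^ 2 : Polynomial ℤ)) (by ring)
    rwa [← pow_add] at hs
  have h2_120 : (Polynomial.X : Polynomial ℤ) ^ 6 ∣ (1 - Polynomial.X ^ 2 : Polynomial ℤ) ^ 120 - (1 - 120 * Polynomial.X ^ 2 + 7140 * Polynomial.X ^ 4 : Polynomial ℤ) := by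
    have hs := dstep h2_60 h2_60 (C := (1 - 120 * Polynomial.X ^ 2 + 7140 * Polynomial.X ^ 4 : Polynomial ℤ)) (r := (-212400 + 3132900 * Polynomial.X ^ 2 : Polynomial ℤ)) (by ring)
    rwa [← pow_add] at hs
  have h2_240 : (Polynomial.X : Polynomial ℤ) ^ 6 ∣ (1 - Polynomial.X ^ 2 : Polynomial ℤ) ^ 240 - (1 - 240 * Polynomial.X ^ 2 + 28680 * Polynomial.X ^ 4 : Polynomial ℤ) := by
    have hs := dstep h2_120 h2_120 (C := (1 - 240 * Polynomial.X ^ 2 + 28680 * Polynomial.X ^ 4 : Polynomial ℤ)) (r := (-1713600 + 50979600 * Polynomial.X ^ 2 : Polynomial ℤ)) (by ring)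
    rwa [← pow_add] at hs
  have h3_1 : (Polynomial.X : Polynomial ℤ) ^ 6 ∣ (1 - Polynomial.X ^ 3 : Polynomial ℤ) ^ 1 - (1 - Polynomial.X ^ 3 : Polynomial ℤ) := ⟨0, by ring⟩
  have h3_2 : (Polynomial.X : Polynomial ℤ) ^ 6 ∣ (1 - Polynomial.X ^ 3 : Polynomial ℤ) ^ 2 - (1 - 2 * Polynomial.X ^ 3 : Polynomial ℤ) := by
    have hs := dstep h3_1 h3_1 (C := (1 - 2 * Polynomial.X ^ 3 : Polynomial ℤ)) (r := (1 : Polynomial ℤ)) (by ring)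
    rwa [← pow_add] at hs
  have h3_3 : (Polynomial.X : Polynomial ℤ) ^ 6 ∣ (1 - Polynomial.X ^ 3 : Polynomial ℤ) ^ 3 - (1 - 3 * Polynomial.X ^ 3 : Polynomial ℤ) := by
    have hs := dstep h3_2 h3_1 (C := (1 - 3 * Polynomial.X ^ 3 : Polynomial ℤ)) (r := (2 : Polynomial ℤ)) (by ring)
    rwa [← pow_add] at hs
  have h3_6 : (Polynomial.X : Polynomial ℤ) ^ 6 ∣ (1 - Polynomial.X ^ 3 : Polynomial ℤ) ^ 6 - (1 - 6 * Polynomial.X ^ 3 : Polynomial ℤ) := by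
    have hs := dstep h3_3 h3_3 (C := (1 - 6 * Polynomial.X ^ 3 : Polynomial ℤ)) (r := (9 : Polynomial ℤ)) (by ring)
    rwa [← pow_add] at hs
  have h3_7 : (Polynomial.X : Polynomial ℤ) ^ 6 ∣ (1 - Polynomial.X ^ 3 : Polynomial ℤ) ^ 7 - (1 - 7 * Polynomial.X ^ 3 : Polynomial ℤ) := by
    have hs := dstep h3_6 h3_1 (C := (1 - 7 * Polynomial.X ^ 3 : Polynomial ℤ)) (r := (6 : Polynomial ℤ)) (by ring)
    rwa [← pow_add] at hs
  have h3_14 : (Polynomial.X : Polynomial ℤ) ^ 6 ∣ (1 - Polynomial.X ^ 3 : Polynomial ℤ) ^ 14 - (1 - 14 * Polynomial.X ^ 3 : Polynomial ℤ) := by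
    have hs := dstep h3_7 h3_7 (C := (1 - 14 * Polynomial.X ^ 3 : Polynomial ℤ)) (r := (49 : Polynomial ℤ)) (by ring)
    rwa [← pow_add] at hs
  have h3_15 : (Polynomial.X : Polynomial ℤ) ^ 6 ∣ (1 - Polynomial.X ^ 3 : Polynomial ℤ) ^ 15 - (1 - 15 * Polynomial.X ^ 3 : Polynomial ℤ) := by
    have hs := dstep h3_14 h3_1 (C := (1 - 15 * Polynomial.X ^ 3 : Polynomial ℤ)) (r := (14 : Polynomial ℤ)) (by ring)
    rwa [← pow_add] at hs
  have h3_30 : (Polynomial.X : Polynomial ℤ) ^ 6 ∣ (1 - Polynomial.X ^ 3 : Polynomial ℤ) ^ 30 - (1 - 30 * Polynomial.X ^ 3 : Polynomial ℤ) := by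
    have hs := dstep h3_15 h3_15 (C := (1 - 30 * Polynomial.X ^ 3 : Polynomial ℤ)) (r := (225 : Polynomial ℤ)) (by ring)
    rwa [← pow_add] at hs
  have h3_60 : (Polynomial.X : Polynomial ℤ) ^ 6 ∣ (1 - Polynomial.X ^ 3 : Polynomial ℤ) ^ 60 - (1 - 60 * Polynomial.X ^ 3 : Polynomial ℤ) := by
    have hs := dstep h3_30 h3_30 (C := (1 - 60 * Polynomial.X ^ 3 : Polynomial ℤ)) (r := (900 : Polynomial ℤ)) (by ring)
    rwa [← pow_add] at hs
  have h3_120 : (Polynomial.X : Polynomial ℤ) ^ 6 ∣ (1 - Polynomial.X ^ 3 : Polynomial ℤ) ^ 120 - (1 - 120 * Polynomial.X ^ 3 : Polynomial ℤ) := by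
    have hs := dstep h3_60 h3_60 (C := (1 - 120 * Polynomial.X ^ 3 : Polynomial ℤ)) (r := (3600 : Polynomial ℤ)) (by ring)
    rwa [← pow_add] at hs
  have h3_240 : (Polynomial.X : Polynomial ℤ) ^ 6 ∣ (1 - Polynomial.X ^ 3 : Polynomial ℤ) ^ 240 - (1 - 240 * Polynomial.X ^ 3 : Polynomial ℤ) := by
    have hs := dstep h3_120 h3_120 (C := (1 - 240 * Polynomial.X ^ 3 : Polynomial ℤ)) (r := (14400 : Polynomial ℤ)) (by ring)
    rwa [← pow_add] at hs
  have h4_1 : (Polynomial.X : Polynomial ℤ) ^ 6 ∣ (1 - Polynomial.X ^ 4 : Polynomial ℤ) ^ 1 - (1 - Polynomial.X ^ 4 : Polynomial ℤ) := ⟨0, by ring⟩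
  have h4_2 : (Polynomial.X : Polynomial ℤ) ^ 6 ∣ (1 - Polynomial.X ^ 4 : Polynomial ℤ) ^ 2 - (1 - 2 * Polynomial.X ^ 4 : Polynomial ℤ) := by
    have hs := dstep h4_1 h4_1 (C := (1 - 2 * Polynomial.X ^ 4 : Polynomial ℤ)) (r := (Polynomial.X ^ 2 : Polynomial ℤ)) (by ring)
    rwa [← pow_add] at hs
  have h4_3 : (Polynomial.X : Polynomial ℤ) ^ 6 ∣ (1 - Polynomial.X ^ 4 : Polynomial ℤ) ^ 3 - (1 - 3 * Polynomial.X ^ 4 : Polynomial ℤ) := by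
    have hs := dstep h4_2 h4_1 (C := (1 - 3 * Polynomial.X ^ 4 : Polynomial ℤ)) (r := (2 * Polynomial.X ^ 2 : Polynomial ℤ)) (by ring)
    rwa [← pow_add] at hs
  have h4_6 : (Polynomial.X : Polynomial ℤ) ^ 6 ∣ (1 - Polynomial.X ^ 4 : Polynomial ℤ) ^ 6 - (1 - 6 * Polynomial.X ^ 4 : Polynomial ℤ) := by
    have hs := dstep h4_3 h4_3 (C := (1 - 6 * Polynomial.X ^ 4 : Polynomial ℤ)) (r := (9 * Polynomial.X ^ 2 : Polynomial ℤ)) (by ring)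
    rwa [← pow_add] at hs
  have h4_7 : (Polynomial.X : Polynomial ℤ) ^ 6 ∣ (1 - Polynomial.X ^ 4 : Polynomial ℤ) ^ 7 - (1 - 7 * Polynomial.X ^ 4 : Polynomial ℤ) := by
    have hs := dstep h4_6 h4_1 (C := (1 - 7 * Polynomial.X ^ 4 : Polynomial ℤ)) (r := (6 * Polynomial.X ^ 2 : Polynomial ℤ)) (by ring)
    rwa [← pow_add] at hs
  have h4_14 : (Polynomial.X : Polynomial ℤ) ^ 6 ∣ (1 - Polynomial.X ^ 4 : Polynomial ℤ) ^ 14 - (1 - 14 * Polynomial.X ^ 4 : Polynomial ℤ) := by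
    have hs := dstep h4_7 h4_7 (C := (1 - 14 * Polynomial.X ^ 4 : Polynomial ℤ)) (r := (49 * Polynomial.X ^ 2 : Polynomial ℤ)) (by ring)
    rwa [← pow_add] at hs
  have h4_15 : (Polynomial.X : Polynomial ℤ) ^ 6 ∣ (1 - Polynomial.X ^ 4 : Polynomial ℤ) ^ 15 - (1 - 15 * Polynomial.X ^ 4 : Polynomial ℤ) := by
    have hs := dstep h4_14 h4_1 (C := (1 - 15 * Polynomial.X ^ 4 : Polynomial ℤ)) (r := (14 * Polynomial.X ^ 2 : Polynomial ℤ)) (by ring)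
    rwa [← pow_add] at hs
  have h4_30 : (Polynomial.X : Polynomial ℤ) ^ 6 ∣ (1 - Polynomial.X ^ 4 : Polynomial ℤ) ^ 30 - (1 - 30 * Polynomial.X ^ 4 : Polynomial ℤ) := by
    have hs := dstep h4_15 h4_15 (C := (1 - 30 * Polynomial.X ^ 4 : Polynomial ℤ)) (r := (225 * Polynomial.X ^ 2 : Polynomial ℤ)) (by ring)
    rwa [← pow_add] at hs
  have h4_60 : (Polynomial.X : Polynomial ℤ) ^ 6 ∣ (1 - Polynomial.X ^ 4 : Polynomial ℤ) ^ 60 - (1 - 60 * Polynomial.X ^ 4 : Polynomial ℤ) := by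
    have hs := dstep h4_30 h4_30 (C := (1 - 60 * Polynomial.X ^ 4 : Polynomial ℤ)) (r := (900 * Polynomial.X ^ 2 : Polynomial ℤ)) (by ring)
    rwa [← pow_add] at hs
  have h4_120 : (Polynomial.X : Polynomial ℤ) ^ 6 ∣ (1 - Polynomial.X ^ 4 : Polynomial ℤ) ^ 120 - (1 - 120 * Polynomial.X ^ 4 : Polynomial ℤ) := by
    have hs := dstep h4_60 h4_60 (C := (1 - 120 * Polynomial.X ^ 4 : Polynomial ℤ)) (r := (3600 * Polynomial.X ^ 2 : Polynomial ℤ)) (by ring)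
    rwa [← pow_add] at hs
  have h4_240 : (Polynomial.X : Polynomial ℤ) ^ 6 ∣ (1 - Polynomial.X ^ 4 : Polynomial ℤ) ^ 240 - (1 - 240 * Polynomial.X ^ 4 : Polynomial ℤ) := by
    have hs := dstep h4_120 h4_120 (C := (1 - 240 * Polynomial.X ^ 4 : Polynomial ℤ)) (r := (14400 * Polynomial.X ^ 2 : Polynomial ℤ)) (by ring)
    rwa [← pow_add] at hs
  have h5_1 : (Polynomial.X : Polynomial ℤ) ^ 6 ∣ (1 - Polynomial.X ^ 5 : Polynomial ℤ) ^ 1 - (1 - Polynomial.X ^ 5 : Polynomial ℤ) := ⟨0, by ring⟩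
  have h5_2 : (Polynomial.X : Polynomial ℤ) ^ 6 ∣ (1 - Polynomial.X ^ 5 : Polynomial ℤ) ^ 2 - (1 - 2 * Polynomial.X ^ 5 : Polynomial ℤ) := by
    have hs := dstep h5_1 h5_1 (C := (1 - 2 * Polynomial.X ^ 5 : Polynomial ℤ)) (r := (Polynomial.X ^ 4 : Polynomial ℤ)) (by ring)
    rwa [← pow_add] at hs
  have h5_3 : (Polynomial.X : Polynomial ℤ) ^ 6 ∣ (1 - Polynomial.X ^ 5 : Polynomial ℤ) ^ 3 - (1 - 3 * Polynomial.X ^ 5 : Polynomial ℤ) := by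
    have hs := dstep h5_2 h5_1 (C := (1 - 3 * Polynomial.X ^ 5 : Polynomial ℤ)) (r := (2 * Polynomial.X ^ 4 : Polynomial ℤ)) (by ring)
    rwa [← pow_add] at hs
  have h5_6 : (Polynomial.X : Polynomial ℤ) ^ 6 ∣ (1 - Polynomial.X ^ 5 : Polynomial ℤ) ^ 6 - (1 - 6 * Polynomial.X ^ 5 : Polynomial ℤ) := by
    have hs := dstep h5_3 h5_3 (C := (1 - 6 * Polynomial.X ^ 5 : Polynomial ℤ)) (r := (9 * Polynomial.X ^ 4 : Polynomial ℤ)) (by ring)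
    rwa [← pow_add] at hs
  have h5_7 : (Polynomial.X : Polynomial ℤ) ^ 6 ∣ (1 - Polynomial.X ^ 5 : Polynomial ℤ) ^ 7 - (1 - 7 * Polynomial.X ^ 5 : Polynomial ℤ) := by
    have hs := dstep h5_6 h5_1 (C := (1 - 7 * Polynomial.X ^ 5 : Polynomial ℤ)) (r := (6 * Polynomial.X ^ 4 : Polynomial ℤ)) (by ring)
    rwa [← pow_add] at hs
  have h5_14 : (Polynomial.X : Polynomial ℤ) ^ 6 ∣ (1 - Polynomial.X ^ 5 : Polynomial ℤ) ^ 14 - (1 - 14 * Polynomial.X ^ 5 : Polynomial ℤ) := by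
    have hs := dstep h5_7 h5_7 (C := (1 - 14 * Polynomial.X ^ 5 : Polynomial ℤ)) (r := (49 * Polynomial.X ^ 4 : Polynomial ℤ)) (by ring)
    rwa [← pow_add] at hs
  have h5_15 : (Polynomial.X : Polynomial ℤ) ^ 6 ∣ (1 - Polynomial.X ^ 5 : Polynomial ℤ) ^ 15 - (1 - 15 * Polynomial.X ^ 5 : Polynomial ℤ) := by
    have hs := dstep h5_14 h5_1 (C := (1 - 15 * Polynomial.X ^ 5 : Polynomial ℤ)) (r := (14 * Polynomial.X ^ 4 : Polynomial ℤ)) (by ring)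
    rwa [← pow_add] at hs
  have h5_30 : (Polynomial.X : Polynomial ℤ) ^ 6 ∣ (1 - Polynomial.X ^ 5 : Polynomial ℤ) ^ 30 - (1 - 30 * Polynomial.X ^ 5 : Polynomial ℤ) := by
    have hs := dstep h5_15 h5_15 (C := (1 - 30 * Polynomial.X ^ 5 : Polynomial ℤ)) (r := (225 * Polynomial.X ^ 4 : Polynomial ℤ)) (by ring)
    rwa [← pow_add] at hs
  have h5_60 : (Polynomial.X : Polynomial ℤ) ^ 6 ∣ (1 - Polynomial.X ^ 5 : Polynomial ℤ) ^ 60 - (1 - 60 * Polynomial.X ^ 5 : Polynomial ℤ) := by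
    have hs := dstep h5_30 h5_30 (C := (1 - 60 * Polynomial.X ^ 5 : Polynomial ℤ)) (r := (900 * Polynomial.X ^ 4 : Polynomial ℤ)) (by ring)
    rwa [← pow_add] at hs
  have h5_120 : (Polynomial.X : Polynomial ℤ) ^ 6 ∣ (1 - Polynomial.X ^ 5 : Polynomial ℤ) ^ 120 - (1 - 120 * Polynomial.X ^ 5 : Polynomial ℤ) := by
    have hs := dstep h5_60 h5_60 (C := (1 - 120 * Polynomial.X ^ 5 : Polynomial ℤ)) (r := (3600 * Polynomial.X ^ 4 : Polynomial ℤ)) (by ring)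
    rwa [← pow_add] at hs
  have h5_240 : (Polynomial.X : Polynomial ℤ) ^ 6 ∣ (1 - Polynomial.X ^ 5 : Polynomial ℤ) ^ 240 - (1 - 240 * Polynomial.X ^ 5 : Polynomial ℤ) := by
    have hs := dstep h5_120 h5_120 (C := (1 - 240 * Polynomial.X ^ 5 : Polynomial ℤ)) (r := (14400 * Polynomial.X ^ 4 : Polynomial ℤ)) (by ring)
    rwa [← pow_add] at hs
  have hb15 : (Polynomial.X : Polynomial ℤ) ^ 6 ∣ (1 - Polynomial.X ^ 15 : Polynomial ℤ) ^ 240 - 1 := hbase 15 (by norm_num)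
  have hb14 : (Polynomial.X : Polynomial ℤ) ^ 6 ∣ (1 - Polynomial.X ^ 14 : Polynomial ℤ) ^ 240 * ((1 - Polynomial.X ^ 15 : Polynomial ℤ) ^ 240) - (1 : Polynomial ℤ) :=
    dstep (hbase 14 (by norm_num)) hb15 (r := (0 : Polynomial ℤ)) (by ring)
  have hb13 : (Polynomial.X : Polynomial ℤ) ^ 6 ∣ (1 - Polynomial.X ^ 13 : Polynomial ℤ) ^ 240 * ((1 - Polynomial.X ^ 14 : Polynomial ℤ) ^ 240 * ((1 - Polynomial.X ^ 15 : Polynomial ℤ) ^ 240)) - (1 : Polynomial ℤ) :=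
    dstep (hbase 13 (by norm_num)) hb14 (r := (0 : Polynomial ℤ)) (by ring)
  have hb12 : (Polynomial.X : Polynomial ℤ) ^ 6 ∣ (1 - Polynomial.X ^ 12 : Polynomial ℤ) ^ 240 * ((1 - Polynomial.X ^ 13 : Polynomial ℤ) ^ 240 * ((1 - Polynomial.X ^ 14 : Polynomial ℤ) ^ 240 * ((1 - Polynomial.X ^ 15 : Polynomial ℤ) ^ 240))) - (1 : Polynomial ℤ) :=
    dstep (hbase 12 (by norm_num)) hb13 (r := (0 : Polynomial ℤ)) (by ring)
  have hb11 : (Polynomial.X : Polynomial ℤ) ^ 6 ∣ (1 - Polynomial.X ^ 11 : Polynomial ℤ) ^ 240 * ((1 - Polynomial.X ^ 12 : Polynomial ℤ) ^ 240 * ((1 - Polynomial.X ^ 13 : Polynomial ℤ) ^ 240 * ((1 - Polynomial.X ^ 14 : Polynomial ℤ) ^ 240 * ((1 - Polynomial.X ^ 15 : Polynomial ℤ) ^ 240)))) - (1 : Polynomial ℤ) :=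
    dstep (hbase 11 (by norm_num)) hb12 (r := (0 : Polynomial ℤ)) (by ring)
  have hb10 : (Polynomial.X : Polynomial ℤ) ^ 6 ∣ (1 - Polynomial.X ^ 10 : Polynomial ℤ) ^ 240 * ((1 - Polynomial.X ^ 11 : Polynomial ℤ) ^ 240 * ((1 - Polynomial.X ^ 12 : Polynomial ℤ) ^ 240 * ((1 - Polynomial.X ^ 13 : Polynomial ℤ) ^ 240 * ((1 - Polynomial.X ^ 14 : Polynomial ℤ) ^ 240 * ((1 - Polynomial.X ^ 15 : Polynomial ℤ) ^ 240))))) - (1 : Polynomial ℤ) :=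
    dstep (hbase 10 (by norm_num)) hb11 (r := (0 : Polynomial ℤ)) (by ring)
  have hb9 : (Polynomial.X : Polynomial ℤ) ^ 6 ∣ (1 - Polynomial.X ^ 9 : Polynomial ℤ) ^ 240 * ((1 - Polynomial.X ^ 10 : Polynomial ℤ) ^ 240 * ((1 - Polynomial.X ^ 11 : Polynomial ℤ) ^ 240 * ((1 - Polynomial.X ^ 12 : Polynomial ℤ) ^ 240 * ((1 - Polynomial.X ^ 13 : Polynomial ℤ) ^ 240 * ((1 - Polynomial.X ^ 14 : Polynomial ℤ) ^ 240 * ((1 - Polynomial.X ^ 15 : Polynomial ℤ) ^ 240)))))) - (1 : Polynomial ℤ) :=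
    dstep (hbase 9 (by norm_num)) hb10 (r := (0 : Polynomial ℤ)) (by ring)
  have hb8 : (Polynomial.X : Polynomial ℤ) ^ 6 ∣ (1 - Polynomial.X ^ 8 : Polynomial ℤ) ^ 240 * ((1 - Polynomial.X ^ 9 : Polynomial ℤ) ^ 240 * ((1 - Polynomial.X ^ 10 : Polynomial ℤ) ^ 240 * ((1 - Polynomial.X ^ 11 : Polynomial ℤ) ^ 240 * ((1 - Polynomial.X ^ 12 : Polynomial ℤ) ^ 240 * ((1 - Polynomial.X ^ 13 : Polynomial ℤ) ^ 240 * ((1 - Polynomial.X ^ 14 : Polynomial ℤ) ^ 240 * ((1 - Polynomial.X ^ 15 : Polynomial ℤ) ^ 240))))))) - (1 : Polynomial ℤ) :=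
    dstep (hbase 8 (by norm_num)) hb9 (r := (0 : Polynomial ℤ)) (by ring)
  have hb7 : (Polynomial.X : Polynomial ℤ) ^ 6 ∣ (1 - Polynomial.X ^ 7 : Polynomial ℤ) ^ 240 * ((1 - Polynomial.X ^ 8 : Polynomial ℤ) ^ 240 * ((1 - Polynomial.X ^ 9 : Polynomial ℤ) ^ 240 * ((1 - Polynomial.X ^ 10 : Polynomial ℤ) ^ 240 * ((1 - Polynomial.X ^ 11 : Polynomial ℤ) ^ 240 * ((1 - Polynomial.X ^ 12 : Polynomial ℤ) ^ 240 * ((1 - Polynomial.X ^ 13 : Polynomial ℤ) ^ 240 * ((1 - Polynomial.X ^ 14 : Polynomial ℤ) ^ 240 * ((1 - Polynomial.X ^ 15 : Polynomial ℤ) ^ 240)))))))) - (1 : Polynomial ℤ) :=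
    dstep (hbase 7 (by norm_num)) hb8 (r := (0 : Polynomial ℤ)) (by ring)
  have hb6 : (Polynomial.X : Polynomial ℤ) ^ 6 ∣ (1 - Polynomial.X ^ 6 : Polynomial ℤ) ^ 240 * ((1 - Polynomial.X ^ 7 : Polynomial ℤ) ^ 240 * ((1 - Polynomial.X ^ 8 : Polynomial ℤ) ^ 240 * ((1 - Polynomial.X ^ 9 : Polynomial ℤ) ^ 240 * ((1 - Polynomial.X ^ 10 : Polynomial ℤ) ^ 240 * ((1 - Polynomial.X ^ 11 : Polynomial ℤ) ^ 240 * ((1 - Polynomial.X ^ 12 : Polynomial ℤ) ^ 240 * ((1 - Polynomial.X ^ 13 : Polynomial ℤ) ^ 240 * ((1 - Polynomial.X ^ 14 : Polynomial ℤ) ^ 240 * ((1 - Polynomial.X ^ 15 : Polynomial ℤ) ^ 240))))))))) - (1 : Polynomial ℤ) :=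
    dstep (hbase 6 (by norm_num)) hb7 (r := (0 : Polynomial ℤ)) (by ring)
  have hb5 : (Polynomial.X : Polynomial ℤ) ^ 6 ∣ (1 - Polynomial.X ^ 5 : Polynomial ℤ) ^ 240 * ((1 - Polynomial.X ^ 6 : Polynomial ℤ) ^ 240 * ((1 - Polynomial.X ^ 7 : Polynomial ℤ) ^ 240 * ((1 - Polynomial.X ^ 8 : Polynomial ℤ) ^ 240 * ((1 - Polynomial.X ^ 9 : Polynomial ℤ) ^ 240 * ((1 - Polynomial.X ^ 10 : Polynomial ℤ) ^ 240 * ((1 - Polynomial.X ^ 11 : Polynomial ℤ) ^ 240 * ((1 - Polynomial.X ^ 12 : Polynomial ℤ) ^ 240 * ((1 - Polynomial.X ^ 13 : Polynomial ℤ) ^ 240 * ((1 - Polynomial.X ^ 14 : Polynomial ℤ) ^ 240 * ((1 - Polynomial.X ^ 15 : Polynomial ℤ) ^ 240)))))))))) - (1 - 240 * Polynomial.X ^ 5 : Polynomial ℤ) :=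
    dstep h5_240 hb6 (r := (0 : Polynomial ℤ)) (by ring)
  have hb4 : (Polynomial.X : Polynomial ℤ) ^ 6 ∣ (1 - Polynomial.X ^ 4 : Polynomial ℤ) ^ 240 * ((1 - Polynomial.X ^ 5 : Polynomial ℤ) ^ 240 * ((1 - Polynomial.X ^ 6 : Polynomial ℤ) ^ 240 * ((1 - Polynomial.X ^ 7 : Polynomial ℤ) ^ 240 * ((1 - Polynomial.X ^ 8 : Polynomial ℤ) ^ 240 * ((1 - Polynomial.X ^ 9 : Polynomial ℤ) ^ 240 * ((1 - Polynomial.X ^ 10 : Polynomial ℤ) ^ 240 * ((1 - Polynomial.X ^ 11 : Polynomial ℤ) ^ 240 * ((1 - Polynomial.X ^ 12 : Polynomial ℤ) ^ 240 * ((1 - Polynomial.X ^ 13 : Polynomial ℤ) ^ 240 * ((1 - Polynomial.X ^ 14 : Polynomial ℤ) ^ 240 * ((1 - Polynomial.X ^ 15 : Polynomial ℤ) ^ 240))))))))))) - (1 - 240 * Polynomial.X ^ 4 - 240 * Polynomial.X ^ 5 : Polynomial ℤ) :=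
    dstep h4_240 hb5 (r := (57600 * Polynomial.X ^ 3 : Polynomial ℤ)) (by ring)
  have hb3 : (Polynomial.X : Polynomial ℤ) ^ 6 ∣ (1 - Polynomial.X ^ 3 : Polynomial ℤ) ^ 240 * ((1 - Polynomial.X ^ 4 : Polynomial ℤ) ^ 240 * ((1 - Polynomial.X ^ 5 : Polynomial ℤ) ^ 240 * ((1 - Polynomial.X ^ 6 : Polynomial ℤ) ^ 240 * ((1 - Polynomial.X ^ 7 : Polynomial ℤ) ^ 240 * ((1 - Polynomial.X ^ 8 : Polynomial ℤ) ^ 240 * ((1 - Polynomial.X ^ 9 : Polynomial ℤ) ^ 240 * ((1 - Polynomial.X ^ 10 : Polynomial ℤ) ^ 240 * ((1 - Polynomial.X ^ 11 : Polynomial ℤ) ^ 240 * ((1 - Polynomial.X ^ 12 : Polynomial ℤ) ^ 240 * ((1 - Polynomial.X ^ 13 : Polynomial ℤ) ^ 240 * ((1 - Polynomial.X ^ 14 : Polynomial ℤ) ^ 240 * ((1 - Polynomial.X ^ 15 : Polynomial ℤ) ^ 240)))))))))))) - (1 - 240 * Polynomial.X ^ 3 - 240 * Polynomial.X ^ 4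 - 240 * Polynomial.X ^ 5 : Polynomial ℤ) :=
    dstep h3_240 hb4 (r := (57600 * Polynomial.X + 57600 * Polynomial.X ^ 2 : Polynomial ℤ)) (by ring)
  have hb2 : (Polynomial.X : Polynomial ℤ) ^ 6 ∣ (1 - Polynomial.X ^ 2 : Polynomial ℤ) ^ 240 * ((1 - Polynomial.X ^ 3 : Polynomial ℤ) ^ 240 * ((1 - Polynomial.X ^ 4 : Polynomial ℤ) ^ 240 * ((1 - Polynomial.X ^ 5 : Polynomial ℤ) ^ 240 * ((1 - Polynomial.X ^ 6 : Polynomial ℤ) ^ 240 * ((1 - Polynomial.X ^ 7 : Polynomial ℤ) ^ 240 * ((1 - Polynomial.X ^ 8 : Polynomial ℤ) ^ 240 * ((1 - Polynomial.X ^ 9 : Polynomial ℤ) ^ 240 * ((1 - Polynomial.X ^ 10 : Polynomial ℤ) ^ 240 * ((1 - Polynomial.X ^ 11 : Polynomial ℤ) ^ 240 * ((1 - Polynomial.X ^ 12 : Polynomial ℤ) ^ 240 * ((1 - Polynomial.X ^ 13 : Polynomial ℤ) ^ 240 * ((1 - Polynomial.X ^ 14 : Polynomial ℤ) ^ 240 *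 ((1 - Polynomial.X ^ 15 : Polynomial ℤ) ^ 240))))))))))))) - (1 - 240 * Polynomial.X ^ 2 - 240 * Polynomial.X ^ 3 + 28440 * Polynomial.X ^ 4 + 57360 * Polynomial.X ^ 5 : Polynomial ℤ) :=
    dstep h2_240 hb3 (r := (57600 - 6825600 * Polynomial.X - 6883200 * Polynomial.X ^ 2 - 6883200 * Polynomial.X ^ 3 : Polynomial ℤ)) (by ring)
  have hb1 : (Polynomial.X : Polynomial ℤ) ^ 6 ∣ (1 - Polynomial.X : Polynomial ℤ) ^ 240 * ((1 - Polynomial.X ^ 2 : Polynomial ℤ) ^ 240 * ((1 - Polynomial.X ^ 3 : Polynomial ℤ) ^ 240 * ((1 - Polynomial.X ^ 4 : Polynomial ℤ) ^ 240 * ((1 - Polynomial.X ^ 5 : Polynomial ℤ) ^ 240 * ((1 - Polynomial.X ^ 6 : Polynomial ℤ) ^ 240 * ((1 - Polynomial.X ^ 7 : Polynomial ℤ) ^ 240 * ((1 - Polynomial.X ^ 8 : Polynomial ℤ) ^ 240 * ((1 - Polynomial.X ^ 9 : Polynomial ℤ) ^ 240 * ((1 - Polynomial.X ^ 10 : Polynomial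 ℤ) ^ 240 * ((1 - Polynomial.X ^ 11 : Polynomial ℤ) ^ 240 * ((1 - Polynomial.X ^ 12 : Polynomial ℤ) ^ 240 * ((1 - Polynomial.X ^ 13 : Polynomial ℤ) ^ 240 * ((1 - Polynomial.X ^ 14 : Polynomial ℤ) ^ 240 * ((1 - Polynomial.X ^ 15 : Polynomial ℤ) ^ 240)))))))))))))) - (1 - 240 * Polynomial.X + 28440 * Polynomial.X ^ 2 - 2217920 * Polynomial.X ^ 3 + 128013180 * Polynomial.X ^ 4 - 5830632288 * Polynomial.X ^ 5 : Polynomial ℤ) :=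
    dstep h1_240 hb2 (r := (-31006521600 + 1431713171520 * Polynomial.X + 5230627540320 * Polynomial.X ^ 2 - 173232365382720 * Polynomial.X ^ 3 - 364984436033280 * Polynomial.X ^ 4 : Polynomial ℤ)) (by ring)
  have hprodQ : (∏ n ∈ Finset.Icc 1 15, (1 - Polynomial.X ^ n) ^ 240 : Polynomial ℤ) =
      (1 - Polynomial.X : Polynomial ℤ) ^ 240 * ((1 - Polynomial.X ^ 2 : Polynomial ℤ) ^ 240 * ((1 - Polynomial.X ^ 3 : Polynomial ℤ) ^ 240 * ((1 - Polynomial.X ^ 4 : Polynomial ℤ) ^ 240 * ((1 - Polynomial.X ^ 5 : Polynomial ℤ) ^ 240 * ((1 - Polynomial.X ^ 6 : Polynomial ℤ) ^ 240 * ((1 - Polynomial.X ^ 7 : Polynomial ℤ) ^ 240 * ((1 - Polynomial.X ^ 8 : Polynomial ℤ) ^ 240 * ((1 - Polynomial.X ^ 9 : Polynomial ℤ) ^ 240 * ((1 - Polynomial.X ^ 10 : Polynomial ℤ) ^ 240 * ((1 - Polynomial.X ^ 11 : Polynomial ℤ) ^ 240 * ((1 - Polynomial.X ^ 12 : Polynomial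 ℤ) ^ 240 * ((1 - Polynomial.X ^ 13 : Polynomial ℤ) ^ 240 * ((1 - Polynomial.X ^ 14 : Polynomial ℤ) ^ 240 * ((1 - Polynomial.X ^ 15 : Polynomial ℤ) ^ 240)))))))))))))) := by
    rw [show (Finset.Icc 1 15 : Finset ℕ) = {1,2,3,4,5,6,7,8,9,10,11,12,13,14,15} from rfl]
    simp [Finset.prod_insert, Finset.mem_insert]
  obtain ⟨hpol, hhp⟩ := hb1
  have hQeq : (∏ n ∈ Finset.Icc 1 15, (1 - Polynomial.X ^ n) ^ 240 : Polynomial ℤ) =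
      (1 - 240 * Polynomial.X + 28440 * Polynomial.X ^ 2 - 2217920 * Polynomial.X ^ 3 + 128013180 * Polynomial.X ^ 4 - 5830632288 * Polynomial.X ^ 5 : Polynomial ℤ) + Polynomial.X ^ 6 * hpol := by
    rw [hprodQ]; exact sub_eq_iff_eq_add'.mp hhp
  have hc0 : (∏ n ∈ Finset.Icc 1 15, (1 - Polynomial.X ^ n) ^ 240 : Polynomial ℤ).coeff 0 = (1 : ℤ) := by
    rw [hQeq, Polynomial.coeff_add, Polynomial.X_pow_mul, Polynomial.coeff_mul_X_pow']
    norm_num [Polynomial.coeff_add, Polynomial.coeff_one, Polynomial.coeff_X]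
  have hc1 : (∏ n ∈ Finset.Icc 1 15, (1 - Polynomial.X ^ n) ^ 240 : Polynomial ℤ).coeff 1 = (-240 : ℤ) := by
    rw [hQeq, Polynomial.coeff_add, Polynomial.X_pow_mul, Polynomial.coeff_mul_X_pow']
    norm_num [Polynomial.coeff_add, Polynomial.coeff_one, Polynomial.coeff_X]
  have hc2 : (∏ n ∈ Finset.Icc 1 15, (1 - Polynomial.X ^ n) ^ 240 : Polynomial ℤ).coeff 2 = (28440 : ℤ) := by
    rw [hQeq, Polynomial.coeff_add, Polynomial.X_pow_mul, Polynomial.coeff_mul_X_pow']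
    norm_num [Polynomial.coeff_add, Polynomial.coeff_one, Polynomial.coeff_X]
  have hc3 : (∏ n ∈ Finset.Icc 1 15, (1 - Polynomial.X ^ n) ^ 240 : Polynomial ℤ).coeff 3 = (-2217920 : ℤ) := by
    rw [hQeq, Polynomial.coeff_add, Polynomial.X_pow_mul, Polynomial.coeff_mul_X_pow']
    norm_num [Polynomial.coeff_add, Polynomial.coeff_one, Polynomial.coeff_X]
  have hc4 : (∏ n ∈ Finset.Icc 1 15, (1 - Polynomial.X ^ n) ^ 240 : Polynomial ℤ).coeff 4 = (128013180 : ℤ) := by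
    rw [hQeq, Polynomial.coeff_add, Polynomial.X_pow_mul, Polynomial.coeff_mul_X_pow']
    norm_num [Polynomial.coeff_add, Polynomial.coeff_one, Polynomial.coeff_X]
  have hc5 : (∏ n ∈ Finset.Icc 1 15, (1 - Polynomial.X ^ n) ^ 240 : Polynomial ℤ).coeff 5 = (-5830632288 : ℤ) := by
    rw [hQeq, Polynomial.coeff_add, Polynomial.X_pow_mul, Polynomial.coeff_mul_X_pow']
    norm_num [Polynomial.coeff_add, Polynomial.coeff_one, Polynomial.coeff_X]
  have hform : ((Polynomial.X * ∏ n ∈ Finset.Icc 1 15, (1 - Polynomial.X ^ n) ^ 24 : Polynomial ℤ) ^ 10)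
      = Polynomial.X ^ 10 * ∏ n ∈ Finset.Icc 1 15, (1 - Polynomial.X ^ n) ^ 240 := by
    rw [mul_pow, ← Finset.prod_pow]
    refine congrArg ((Polynomial.X : Polynomial ℤ) ^ 10 * ·) ?_
    exact Finset.prod_congr rfl fun k _ => by rw [← pow_mul]
  have hXc : ∀ i : ℕ, ((Polynomial.X : Polynomial ℤ) ^ 10 * ∏ n ∈ Finset.Icc 1 15, (1 - Polynomial.X ^ n) ^ 240).coeff i =
      if 10 ≤ i then (∏ n ∈ Finset.Icc 1 15, (1 - Polynomial.X ^ n) ^ 240 : Polynomial ℤ).coeff (i - 10) else 0 :=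
    fun i => by rw [Polynomial.X_pow_mul, Polynomial.coeff_mul_X_pow']
  rw [hform]
  interval_cases j <;> norm_num [hXc, hc0, hc1, hc2, hc3, hc4, hc5]


theorem delta_fifty_qexpansion_mod_twentyfive (Δ : PowerSeries ℤ)
    (hΔ : ∀ N : ℕ, ∀ m ≤ N + 1,
      coeff m Δ = coeff m (X * ∏ n ∈ Finset.Icc 1 N, (1 - X ^ n) ^ 24)) :
    (∀ n : ℕ, ¬ (5 ∣ n) → (25 : ℤ) ∣ coeff n (Δ ^ 50)) ∧
    (∀ n < 80,
      coeff n (Δ ^ 50) ≡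
        (if n = 50 then 1 else if n = 55 then 10 else if n = 60 then 15 else
         if n = 65 then 5 else if n = 70 then 5 else if n = 75 then 12 else 0)
        [ZMOD 25]) := by
  classical
  set pp : ℕ → Polynomial ℤ :=
    fun N => Polynomial.X * ∏ n ∈ Finset.Icc 1 N, (1 - Polynomial.X ^ n) ^ 24 with hpp
  have hcoe : ∀ N : ℕ, ((pp N : Polynomial ℤ) : PowerSeries ℤ) =
      X * ∏ n ∈ Finset.Icc 1 N, (1 - X ^ n) ^ 24 := by
    intro N
    simp only [hpp]
    rw [Polynomial.coe_mul, Polynomial.coe_X, ← Polynomial.coeToPowerSeries.ringHom_apply,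
      map_prod]
    refine congrArg _ (Finset.prod_congr rfl fun k _ => ?_)
    simp
  have hagree : ∀ N : ℕ, ∀ m ≤ N + 1,
      coeff m Δ = coeff m ((pp N : Polynomial ℤ) : PowerSeries ℤ) := by
    intro N m hm; rw [hΔ N m hm, hcoe N]
  set E : PowerSeries ℤ :=
    PowerSeries.mk (fun m => if 5 ∣ m then coeff (m / 5) (Δ ^ 2) else 0) with hEdef
  have hEc : ∀ m : ℕ, coeff m E = if 5 ∣ m then coeff (m / 5) (Δ ^ 2) else 0 := fun m => by
    rw [hEdef, coeff_mk]
  have hm5 : ∀ m : ℕ, (5 : ℤ) ∣ coeff m (Δ ^ 10) - coeff m E := by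
    intro m
    have h10 : coeff m (Δ ^ 10) = (pp m ^ 10).coeff m := by
      rw [coeff_pow_congr (hagree m) 10 m (by omega), ← Polynomial.coe_pow, Polynomial.coeff_coe]
    have hE' : coeff m E = (Polynomial.expand ℤ 5 (pp m ^ 2)).coeff m := by
      rw [hEc m, Polynomial.coeff_expand (by norm_num)]
      by_cases h5 : 5 ∣ m
      · rw [if_pos h5, if_pos h5, coeff_pow_congr (hagree m) 2 (m / 5) (by omega),
          ← Polynomial.coe_pow, Polynomial.coeff_coe]
      · rw [if_neg h5, if_neg h5]
    rw [h10, hE']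
    exact pow10_expand_dvd (pp m) m
  set Hs : PowerSeries ℤ :=
    PowerSeries.mk (fun m => (coeff m (Δ ^ 10) - coeff m E) / 5) with hHdef
  have hsplit : Δ ^ 10 = E + 5 * Hs := by
    ext m
    have hH : coeff m Hs = (coeff m (Δ ^ 10) - coeff m E) / 5 := by
      rw [hHdef, coeff_mk]
    obtain ⟨c, hc⟩ := hm5 m
    rw [map_add, show ((5 : PowerSeries ℤ)) = C 5 from (map_ofNat C 5).symm, coeff_C_mul,
      hH, hc, Int.mul_ediv_cancel_left _ (by norm_num : (5 : ℤ) ≠ 0)]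
    omega
  have hpow : Δ ^ 50 = E ^ 5 + 25 * (E ^ 4 * Hs + 10 * E ^ 3 * Hs ^ 2 + 50 * E ^ 2 * Hs ^ 3 +
      125 * E * Hs ^ 4 + 125 * Hs ^ 5) := by
    rw [show (50 : ℕ) = 10 * 5 from rfl, pow_mul, hsplit]
    ring
  have hco : ∀ nn : ℕ, (25 : ℤ) ∣ coeff nn (Δ ^ 50) - coeff nn (E ^ 5) := by
    intro nn
    rw [hpow, map_add, show ((25 : PowerSeries ℤ)) = C 25 from (map_ofNat C 25).symm,
      coeff_C_mul]
    exact ⟨coeff nn (E ^ 4 * Hs + 10 * E ^ 3 * Hs ^ 2 + 50 * E ^ 2 * Hs ^ 3 +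
      125 * E * Hs ^ 4 + 125 * Hs ^ 5), by ring⟩
  have hEsupp : ∀ m : ℕ, ¬ (5 ∣ m) → coeff m (E ^ 5) = 0 :=
    supp_pow (fun m hm => by rw [hEc m, if_neg hm]) 5
  constructor
  · intro n hn
    have h := hco n
    rwa [hEsupp n hn, sub_zero] at h
  · intro n hn
    have hEagree : ∀ m ≤ 79, coeff m E =
        coeff m ((Polynomial.expand ℤ 5 (pp 15 ^ 2) : Polynomial ℤ) : PowerSeries ℤ) := by
      intro m hm
      rw [hEc m, Polynomial.coeff_coe, Polynomial.coeff_expand (by norm_num)]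
      by_cases h5 : 5 ∣ m
      · rw [if_pos h5, if_pos h5, coeff_pow_congr (hagree 15) 2 (m / 5) (by omega),
          ← Polynomial.coe_pow, Polynomial.coeff_coe]
      · rw [if_neg h5, if_neg h5]
    have hE5 : coeff n (E ^ 5) = if 5 ∣ n then (pp 15 ^ 10).coeff (n / 5) else 0 := by
      rw [coeff_pow_congr hEagree 5 n (by omega), ← Polynomial.coe_pow, Polynomial.coeff_coe,
        ← map_pow, show (pp 15 ^ 2) ^ 5 = pp 15 ^ 10 from by rw [← pow_mul],
        Polynomial.coeff_expand (by norm_num)]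
    have hpp15 : pp 15 = Polynomial.X * ∏ n ∈ Finset.Icc 1 15, (1 - Polynomial.X ^ n) ^ 24 := by
      simp only [hpp]
    refine Int.modEq_iff_dvd.2 ?_
    by_cases h5 : 5 ∣ n
    · obtain ⟨j, rfl⟩ := h5
      have hj : j ≤ 15 := by omega
      have hd5 : 5 * j / 5 = j := by omega
      have hkey := keyQ j hj
      rw [← hpp15] at hkey
      have h1 : (25 : ℤ) ∣ coeff (5 * j) (Δ ^ 50) - (pp 15 ^ 10).coeff j := by
        have h := hco (5 * j)
        rwa [hE5, if_pos (Dvd.intro j rfl), hd5] at h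
      have hT : (if 5 * j = 50 then (1 : ℤ) else if 5 * j = 55 then 10 else
            if 5 * j = 60 then 15 else if 5 * j = 65 then 5 else if 5 * j = 70 then 5 else
            if 5 * j = 75 then 12 else 0)
          = (if j = 10 then (1 : ℤ) else if j = 11 then 10 else if j = 12 then 15 else
            if j = 13 then 5 else if j = 14 then 5 else if j = 15 then 12 else 0) := by
        interval_cases j <;> norm_num
      rw [hT]
      obtain ⟨u, hu⟩ := h1
      obtain ⟨v, hv⟩ := hkey
      exact ⟨-(v + u), by omega⟩
    · rw [if_neg (by omega : ¬ n = 50), if_neg (by omega : ¬ n = 55),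
        if_neg (by omega : ¬ n = 60), if_neg (by omega : ¬ n = 65),
        if_neg (by omega : ¬ n = 70), if_neg (by omega : ¬ n = 75)]
      have h := hco n
      rw [hE5, if_neg h5, sub_zero] at h
      obtain ⟨u, hu⟩ := h
      exact ⟨-u, by omega⟩
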